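/- For every X ∈ Γ₀(p^k) such that det X ≡ 1 (mod p^l) or det X ≡ −1 (mod p^l), there exists a matrix Y ∈ M₂(ℤ) with det Y = 1 or det Y = −1 and with (2,1) entry divisible by p^k, such that (viewing Y as a matrix over ℤ_p via the inclusion ℤ → ℤ_p) X − Y ∈ A·M₂(ℤ_p), i.e., p^l divides both entries of the first row of X − Y and p^{l+k} divides both entries of the second row of X − Y. -/

import Mathlib

open Matrix

/-- Adjust `d` modulo `n` to become coprime to `c`, given `IsCoprime c n`. -/
lemma coprimify {c d n : ℤ} (h : IsCoprime c n) :
    ∃ d' : ℤ, IsCoprime c d' ∧ n ∣ d' - d := by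
  obtain ⟨x, y, hxy⟩ := h
  refine ⟨1 - x * (1 - d) * c, ⟨x * (1 - d), 1, by ring⟩, ⟨y * (1 - d), ?_⟩⟩
  linear_combination (d - 1) * hxy

/-- Main auxiliary lemma: given an integer approximation of `X` whose bottom row is
coprime, fix up the top row to get determinant exactly `ε`. -/
lemma stmt7_aux (p : ℕ) [Fact p.Prime] (l k : ℕ) (X : GL (Fin 2) ℤ_[p]) (ε : ℤ)
    (hε : ε = 1 ∨ ε = -1)
    (hεd : (p : ℤ_[p]) ^ l ∣ (Matrix.det (X : Matrix (Fin 2) (Fin 2) ℤ_[p]) - (ε : ℤ_[p])))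
    (a b c d : ℤ) (hcd : IsCoprime c d) (hkc : (p : ℤ) ^ k ∣ c)
    (hA : (p : ℤ_[p]) ^ l ∣ ((X : Matrix (Fin 2) (Fin 2) ℤ_[p]) 0 0 - (a : ℤ_[p])))
    (hB : (p : ℤ_[p]) ^ l ∣ ((X : Matrix (Fin 2) (Fin 2) ℤ_[p]) 0 1 - (b : ℤ_[p])))
    (hC : (p : ℤ_[p]) ^ (l + k) ∣ ((X : Matrix (Fin 2) (Fin 2) ℤ_[p]) 1 0 - (c : ℤ_[p])))
    (hD : (p : ℤ_[p]) ^ (l + k) ∣ ((X : Matrix (Fin 2) (Fin 2) ℤ_[p]) 1 1 - (d : ℤ_[p]))) :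
    ∃ Y : Matrix (Fin 2) (Fin 2) ℤ, (Y.det = 1 ∨ Y.det = -1) ∧ (p : ℤ) ^ k ∣ Y 1 0 ∧
      (p : ℤ_[p]) ^ l ∣
        ((X : Matrix (Fin 2) (Fin 2) ℤ_[p]) - Y.map (Int.cast : ℤ → ℤ_[p])) 0 0 ∧
      (p : ℤ_[p]) ^ l ∣
        ((X : Matrix (Fin 2) (Fin 2) ℤ_[p]) - Y.map (Int.cast : ℤ → ℤ_[p])) 0 1 ∧
      (p : ℤ_[p]) ^ (l + k) ∣
        ((X : Matrix (Fin 2) (Fin 2) ℤ_[p]) - Y.map (Int.cast : ℤ → ℤ_[p])) 1 0 ∧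
      (p : ℤ_[p]) ^ (l + k) ∣
        ((X : Matrix (Fin 2) (Fin 2) ℤ_[p]) - Y.map (Int.cast : ℤ → ℤ_[p])) 1 1 := by
  set M : Matrix (Fin 2) (Fin 2) ℤ_[p] := (X : Matrix (Fin 2) (Fin 2) ℤ_[p]) with hM
  have hlk : (p : ℤ_[p]) ^ l ∣ (p : ℤ_[p]) ^ (l + k) := pow_dvd_pow _ (Nat.le_add_right l k)
  -- the approximate determinant is ε modulo p^l, as an integer
  have hmdiv0 : (p : ℤ_[p]) ^ l ∣ ((a * d - b * c - ε : ℤ) : ℤ_[p]) := by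
    have e : ((a * d - b * c - ε : ℤ) : ℤ_[p]) =
        (M.det - (ε : ℤ_[p])) - ((M 0 0 - a) * d + M 0 0 * (M 1 1 - d))
          + ((M 0 1 - b) * c + M 0 1 * (M 1 0 - c)) := by
      rw [Matrix.det_fin_two]
      push_cast
      ring
    rw [e]
    exact dvd_add
      (dvd_sub hεd (dvd_add ((hA).mul_right _) (((hlk.trans hD)).mul_left _)))
      (dvd_add ((hB).mul_right _) (((hlk.trans hC)).mul_left _))
  obtain ⟨m, hm⟩ : ((p : ℤ) ^ l) ∣ (a * d - b * c - ε) :=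
    (PadicInt.pow_p_dvd_int_iff l _).mp hmdiv0
  obtain ⟨x, y, hxy⟩ := hcd
  refine ⟨!![a - p ^ l * m * y, b + p ^ l * m * x; c, d], ?_, ?_, ?_, ?_, ?_, ?_⟩
  · have : (!![a - p ^ l * m * y, b + p ^ l * m * x; c, d] : Matrix (Fin 2) (Fin 2) ℤ).det
        = ε := by
      rw [Matrix.det_fin_two_of]
      linear_combination hm - (p : ℤ) ^ l * m * hxy
    rw [this]
    exact hε
  · simpa using hkc
  · have e : (M - (!![a - p ^ l * m * y, b + p ^ l * m * x; c, d]).map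
        (Int.cast : ℤ → ℤ_[p])) 0 0
        = (M 0 0 - (a : ℤ_[p])) + (p : ℤ_[p]) ^ l * ((m : ℤ_[p]) * y) := by
      simp [Matrix.sub_apply, Matrix.map_apply]
      ring
    rw [e]
    exact dvd_add hA (dvd_mul_right _ _)
  · have e : (M - (!![a - p ^ l * m * y, b + p ^ l * m * x; c, d]).map
        (Int.cast : ℤ → ℤ_[p])) 0 1
        = (M 0 1 - (b : ℤ_[p])) - (p : ℤ_[p]) ^ l * ((m : ℤ_[p]) * x) := by
      simp [Matrix.sub_apply, Matrix.map_apply]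
      ring
    rw [e]
    exact dvd_sub hB (dvd_mul_right _ _)
  · simpa [Matrix.sub_apply, Matrix.map_apply] using hC
  · simpa [Matrix.sub_apply, Matrix.map_apply] using hD


/-- For every `X ∈ Γ₀(p^k)` with `det X ≡ 1 (mod p^l)` or
`det X ≡ −1 (mod p^l)`, there exists `Y ∈ M₂(ℤ)` with `det Y = 1` or `det Y = −1`, and
with `(2,1)` entry divisible by `p^k`, such that, viewing `Y` over `ℤ_p`,
`X − Y ∈ diag(p^l, p^{l+k})·M₂(ℤ_p)`, i.e. `p^l` divides both entries of the first row
of `X − Y` and `p^{l+k}` divides both entries of the second row. -/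
theorem stmt_7 (p : ℕ) [Fact p.Prime] (l k : ℕ) (X : GL (Fin 2) ℤ_[p])
    (hX : (p : ℤ_[p]) ^ k ∣ (X : Matrix (Fin 2) (Fin 2) ℤ_[p]) 1 0)
    (hdet : (p : ℤ_[p]) ^ l ∣ (Matrix.det (X : Matrix (Fin 2) (Fin 2) ℤ_[p]) - 1) ∨
            (p : ℤ_[p]) ^ l ∣ (Matrix.det (X : Matrix (Fin 2) (Fin 2) ℤ_[p]) + 1)) :
    ∃ Y : Matrix (Fin 2) (Fin 2) ℤ, (Y.det = 1 ∨ Y.det = -1) ∧ (p : ℤ) ^ k ∣ Y 1 0 ∧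
      (p : ℤ_[p]) ^ l ∣
        ((X : Matrix (Fin 2) (Fin 2) ℤ_[p]) - Y.map (Int.cast : ℤ → ℤ_[p])) 0 0 ∧
      (p : ℤ_[p]) ^ l ∣
        ((X : Matrix (Fin 2) (Fin 2) ℤ_[p]) - Y.map (Int.cast : ℤ → ℤ_[p])) 0 1 ∧
      (p : ℤ_[p]) ^ (l + k) ∣
        ((X : Matrix (Fin 2) (Fin 2) ℤ_[p]) - Y.map (Int.cast : ℤ → ℤ_[p])) 1 0 ∧
      (p : ℤ_[p]) ^ (l + k) ∣
        ((X : Matrix (Fin 2) (Fin 2) ℤ_[p]) - Y.map (Int.cast : ℤ → ℤ_[p])) 1 1 := by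
  have hp : p.Prime := Fact.out
  set M : Matrix (Fin 2) (Fin 2) ℤ_[p] := (X : Matrix (Fin 2) (Fin 2) ℤ_[p]) with hM
  obtain ⟨ε, hε, hεd⟩ : ∃ ε : ℤ, (ε = 1 ∨ ε = -1) ∧
      (p : ℤ_[p]) ^ l ∣ (M.det - (ε : ℤ_[p])) := by
    rcases hdet with h | h
    · exact ⟨1, Or.inl rfl, by simpa using h⟩
    · exact ⟨-1, Or.inr rfl, by simpa [sub_neg_eq_add] using h⟩
  rcases Nat.eq_zero_or_pos (l + k) with hN | hN
  · obtain ⟨hl, hk⟩ := Nat.add_eq_zero.mp hN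
    subst hl; subst hk
    exact stmt7_aux p 0 0 X ε hε hεd 0 0 0 1 (isCoprime_zero_left.mpr isUnit_one)
      (by simp) (by simp) (by simp) (by simp) (by simp)
  have key : ∀ z : ℤ_[p], (p : ℤ_[p]) ^ (l + k) ∣ z - ((z.appr (l + k) : ℤ) : ℤ_[p]) := by
    intro z
    have := (Ideal.mem_span_singleton).mp (PadicInt.appr_spec (l + k) z)
    exact_mod_cast this
  set a : ℤ := ((M 0 0).appr (l + k) : ℤ) with ha
  set b : ℤ := ((M 0 1).appr (l + k) : ℤ) with hb
  set c : ℤ := ((M 1 0).appr (l + k) : ℤ) with hc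
  set d : ℤ := ((M 1 1).appr (l + k) : ℤ) with hd
  have hlk : (p : ℤ_[p]) ^ l ∣ (p : ℤ_[p]) ^ (l + k) := pow_dvd_pow _ (Nat.le_add_right l k)
  have hkk : (p : ℤ_[p]) ^ k ∣ (p : ℤ_[p]) ^ (l + k) := pow_dvd_pow _ (Nat.le_add_left k l)
  have hkkz : (p : ℤ) ^ k ∣ (p : ℤ) ^ (l + k) := pow_dvd_pow _ (Nat.le_add_left k l)
  have hA : (p : ℤ_[p]) ^ l ∣ (M 0 0 - (a : ℤ_[p])) := hlk.trans (key _)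
  have hB : (p : ℤ_[p]) ^ l ∣ (M 0 1 - (b : ℤ_[p])) := hlk.trans (key _)
  have hC : (p : ℤ_[p]) ^ (l + k) ∣ (M 1 0 - (c : ℤ_[p])) := key _
  have hD : (p : ℤ_[p]) ^ (l + k) ∣ (M 1 1 - (d : ℤ_[p])) := key _
  have hck : (p : ℤ) ^ k ∣ c := by
    rw [← PadicInt.pow_p_dvd_int_iff]
    have e : ((c : ℤ) : ℤ_[p]) = M 1 0 - (M 1 0 - (c : ℤ_[p])) := by ring
    rw [e]
    exact dvd_sub hX (hkk.trans hC)
  -- integer-to-padic divisibility cast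
  have castdvd : ∀ (n : ℕ) (v : ℤ), (p : ℤ) ^ n ∣ v → (p : ℤ_[p]) ^ n ∣ (v : ℤ_[p]) :=
    fun n v h => (PadicInt.pow_p_dvd_int_iff n v).mpr h
  have hdet_unit : IsUnit M.det := (Matrix.isUnit_iff_isUnit_det _).mp X.isUnit
  have hcase : ¬ (p : ℤ) ∣ c ∨ ¬ (p : ℤ) ∣ d := by
    by_contra h
    push_neg at h
    have hp1 : (p : ℤ_[p]) ∣ (p : ℤ_[p]) ^ (l + k) := dvd_pow_self _ hN.ne'
    have h1 : (p : ℤ_[p]) ∣ M 1 0 := by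
      have e : M 1 0 = (c : ℤ_[p]) + (M 1 0 - (c : ℤ_[p])) := by ring
      rw [e]
      exact dvd_add (by simpa using castdvd 1 c (by simpa using h.1)) (hp1.trans hC)
    have h2 : (p : ℤ_[p]) ∣ M 1 1 := by
      have e : M 1 1 = (d : ℤ_[p]) + (M 1 1 - (d : ℤ_[p])) := by ring
      rw [e]
      exact dvd_add (by simpa using castdvd 1 d (by simpa using h.2)) (hp1.trans hD)
    have hdvd : (p : ℤ_[p]) ∣ M.det := by
      rw [Matrix.det_fin_two]
      exact dvd_sub (h2.mul_left _) (h1.mul_left _)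
    exact mem_nonunits_iff.mp PadicInt.p_nonunit (isUnit_of_dvd_unit hdvd hdet_unit)
  have hprime : Prime (p : ℤ) := Nat.prime_iff_prime_int.mp hp
  rcases hcase with hpc | hpd
  · have hcop : IsCoprime c ((p : ℤ) ^ (l + k)) :=
      ((hprime.coprime_iff_not_dvd.mpr hpc).symm).pow_right
    obtain ⟨d', hcd', hdd'⟩ := coprimify hcop
    refine stmt7_aux p l k X ε hε hεd a b c d' hcd' hck hA hB hC ?_
    have e : M 1 1 - (d' : ℤ_[p]) = (M 1 1 - (d : ℤ_[p])) - ((d' - d : ℤ) : ℤ_[p]) := by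
      push_cast; ring
    rw [e]
    exact dvd_sub hD (castdvd _ _ hdd')
  · have hcop : IsCoprime d ((p : ℤ) ^ (l + k)) :=
      ((hprime.coprime_iff_not_dvd.mpr hpd).symm).pow_right
    obtain ⟨c', hdc', hcc'⟩ := coprimify hcop
    have hcast : ((c' - c : ℤ) : ℤ_[p]) = (c' : ℤ_[p]) - (c : ℤ_[p]) := by push_cast; ring
    have hdvdc' : (p : ℤ_[p]) ^ (l + k) ∣ ((c' : ℤ_[p]) - (c : ℤ_[p])) := by
      rw [← hcast]
      exact castdvd _ _ hcc'
    refine stmt7_aux p l k X ε hε hεd a b c' d hdc'.symm ?_ hA hB ?_ hD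
    · simpa using dvd_add hck (hkkz.trans hcc')
    · have e : M 1 0 - (c' : ℤ_[p]) = (M 1 0 - (c : ℤ_[p])) - ((c' : ℤ_[p]) - (c : ℤ_[p])) := by
        ring
      rw [e]
      exact dvd_sub hC hdvdc'
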